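/- Let G be a group of the form Δ ⋊ L with Δ abelian, and let k be a field with char k ∤ |G| such that every irreducible representation of Δ over k has degree 1. For a character ψ of Δ, let L_ψ = Stab_L(ψ) under the action (ψ^g)(a) = ψ(g a g⁻¹), let G_ψ = Δ·L_ψ, extend ψ to G_ψ by ψ(al) = ψ(a), let λ be an irreducible representation of L_ψ inflated to G_ψ, and set θ_{ψ,λ} = Ind_{G_ψ}^G(ψ ⊗ λ). Then θ_{ψ,λ} is an irreducible representation of G. -/

import Mathlib

open SemidirectProduct

variable {k : Type} [Field k] {Δ L : Type} [Group Δ] [Group L] (φ : L →* MulAut Δ)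

/-- The stabilizer in `L` of a character `ψ` of `Δ`, for the action
`(ψ^l)(a) = ψ(l a l⁻¹) = ψ(φ l a)`. -/
def Lstab (ψ : Δ →* kˣ) : Subgroup L where
  carrier := {l | ∀ a, ψ (φ l a) = ψ a}
  one_mem' := by intro a; simp
  mul_mem' := by
    intro x y hx hy a
    rw [map_mul, MulAut.mul_apply, hx, hy]
  inv_mem' := by
    intro x hx a
    have h := hx (φ x⁻¹ a)
    rw [map_inv, MulAut.inv_def, MulEquiv.apply_symm_apply] at h
    rw [map_inv, MulAut.inv_def]
    exact h.symm

/-- The subgroup `G_ψ = Δ ⋊ L_ψ` of `G = Δ ⋊ L`. -/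
def Gstab (ψ : Δ →* kˣ) : Subgroup (Δ ⋊[φ] L) := (Lstab φ ψ).comap rightHom

/-- The extension of `ψ` to `G_ψ`, `ψ(al) = ψ(a)`. -/
def psiExt (ψ : Δ →* kˣ) : Gstab φ ψ →* kˣ where
  toFun g := ψ (g : Δ ⋊[φ] L).left
  map_one' := by simp
  map_mul' := by
    rintro ⟨g, hg⟩ ⟨g', hg'⟩
    show ψ ((g * g').left) = ψ g.left * ψ g'.left
    have h2 : g.right ∈ Lstab φ ψ := Subgroup.mem_comap.mp hg
    rw [mul_left, map_mul, h2 g'.left]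

/-- The projection `G_ψ → L_ψ`. -/
def toLstab (ψ : Δ →* kˣ) : Gstab φ ψ →* Lstab φ ψ :=
  MonoidHom.codRestrict (rightHom.comp (Gstab φ ψ).subtype) (Lstab φ ψ)
    (fun g => Subgroup.mem_comap.mp g.2)

variable {V : Type} [AddCommGroup V] [Module k V]

/-- The representation `ψ ⊗ λ` of `G_ψ`: `(al) ↦ ψ(a)·λ(l)`. -/
def twistRep (ψ : Δ →* kˣ) (lam : Representation k (Lstab φ ψ) V) :
    Representation k (Gstab φ ψ) V where
  toFun g := (psiExt φ ψ g : k) • lam (toLstab φ ψ g)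
  map_one' := by simp
  map_mul' g h := by
    apply LinearMap.ext
    intro v
    simp [map_mul, Units.val_mul, Module.End.mul_apply, smul_smul, LinearMap.map_smul]
    rw [mul_comm]

variable {G : Type} [Group G]

/-- The carrier of the induced representation `Ind_H^G ρ`: functions `f : G → V`
with `f(hg) = ρ(h) f(g)` for `h ∈ H`. -/
def IndSubmodule (H : Subgroup G) (ρ : Representation k H V) : Submodule k (G → V) where
  carrier := {f | ∀ (h : H) (g : G), f (↑h * g) = ρ h (f g)}
  zero_mem' := by intro h g; simp
  add_mem' := by
    intro f f' hf hf' h g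
    simp [hf h g, hf' h g]
  smul_mem' := by
    intro c f hf h g
    simp [hf h g]

/-- The induced representation `Ind_H^G ρ`, with `G` acting by right translation. -/
def IndRep (H : Subgroup G) (ρ : Representation k H V) :
    Representation k G (IndSubmodule H ρ) where
  toFun g₀ :=
    { toFun := fun f => ⟨fun x => (f : G → V) (x * g₀), fun h g => by
        simpa [mul_assoc] using f.2 h (g * g₀)⟩
      map_add' := fun f f' => by
        apply Subtype.ext
        funext x
        simp
      map_smul' := fun c f => by
        apply Subtype.ext
        funext x
        simp }
  map_one' := by
    apply LinearMap.ext
    intro f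
    apply Subtype.ext
    funext x
    simp
  map_mul' a b := by
    apply LinearMap.ext
    intro f
    apply Subtype.ext
    funext x
    simp [mul_assoc]

/-- `ρ.asModule` is a type synonym for `V`, so inherits its `AddCommGroup` structure. -/
instance asModuleAddCommGroup {k G V : Type} [CommSemiring k] [Monoid G] [AddCommGroup V]
    [Module k V] (ρ : Representation k G V) : AddCommGroup ρ.asModule :=
  inferInstanceAs (AddCommGroup V)


-- orthogonality
theorem aux_sum_char {k : Type} [Field k] {Δ : Type} [Group Δ] [Fintype Δ]
    (χ : Δ →* kˣ) (b : Δ) (hb : χ b ≠ 1) : ∑ a : Δ, (χ a : k) = 0 := by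
  have h1 : ∑ a : Δ, (χ (b * a) : k) = ∑ a : Δ, (χ a : k) :=
    Fintype.sum_equiv (Equiv.mulLeft b) _ _ (fun a => rfl)
  have h2 : ∑ a : Δ, (χ (b * a) : k) = (χ b : k) * ∑ a : Δ, (χ a : k) := by
    rw [Finset.mul_sum]
    exact Finset.sum_congr rfl (fun a _ => by rw [map_mul, Units.val_mul])
  have h3 : ((χ b : k) - 1) * ∑ a : Δ, (χ a : k) = 0 := by
    rw [sub_mul, one_mul, ← h2, h1, sub_self]
  rcases mul_eq_zero.mp h3 with h | h
  · exact absurd (Units.ext (by simpa using sub_eq_zero.mp h)) hb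
  · exact h

theorem aux_card_sdp {Δ L : Type} [Group Δ] [Group L] (φ : L →* MulAut Δ) :
    Nat.card (Δ ⋊[φ] L) = Nat.card Δ * Nat.card L := by
  rw [← Nat.card_prod]
  exact Nat.card_congr ⟨fun g => (g.left, g.right), fun p => ⟨p.1, p.2⟩,
    fun g => rfl, fun p => rfl⟩

theorem aux_cast_ne_zero {k : Type} [Field k] {G : Type} [Group G] [Finite G]
    (hchar : ¬ ((ringChar k : ℕ) ∣ Nat.card G)) {n : ℕ} (hn : n ∣ Nat.card G) :
    (n : k) ≠ 0 := by
  intro h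
  haveI := ringChar.charP k
  exact hchar (dvd_trans ((CharP.cast_eq_zero_iff k (ringChar k) n).mp h) hn)

section Bridge
variable {k G V : Type} [Field k] [Group G] [AddCommGroup V] [Module k V]
  (ρ : Representation k G V)

/-- Turn an invariant `k`-submodule into a `MonoidAlgebra`-submodule of `ρ.asModule`. -/
def invtSubmodule (S : Submodule k V) (hS : ∀ (g : G), ∀ v ∈ S, ρ g v ∈ S) :
    Submodule (MonoidAlgebra k G) ρ.asModule where
  carrier := {v : ρ.asModule | ρ.asModuleEquiv v ∈ S}
  zero_mem' := S.zero_mem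
  add_mem' := S.add_mem
  smul_mem' := by
    intro r v hv
    show ρ.asAlgebraHom r v ∈ S
    induction r using MonoidAlgebra.induction_linear with
    | zero => rw [map_zero]; exact S.zero_mem
    | add f g hf hg => rw [map_add]; exact S.add_mem hf hg
    | single g c =>
        rw [Representation.asAlgebraHom_single]
        exact S.smul_mem c (hS g v hv)

theorem mem_invtSubmodule {S : Submodule k V} {hS} {v : V} :
    v ∈ invtSubmodule ρ S hS ↔ v ∈ S := Iff.rfl

theorem smul_mem_ma (p : Submodule (MonoidAlgebra k G) ρ.asModule) (c : k)
    {v : ρ.asModule} (hv : v ∈ p) : c • v ∈ p := by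
  have h : (algebraMap k (MonoidAlgebra k G) c) • v = c • v :=
    (ρ.asModuleEquiv_symm_map_smul c v).symm
  rw [← h]
  exact p.smul_mem _ hv

theorem rho_mem_ma (p : Submodule (MonoidAlgebra k G) ρ.asModule) (g : G)
    {v : ρ.asModule} (hv : v ∈ p) : ρ g v ∈ p := by
  have h : (MonoidAlgebra.of k G g) • v = ρ g v := (ρ.asModuleEquiv_symm_map_rho g v).symm
  rw [← h]
  exact p.smul_mem _ hv

end Bridge

section SDP
variable {k : Type} [Field k] {Δ L : Type} [CommGroup Δ] [Group L] (φ : L →* MulAut Δ)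
variable {V : Type} [AddCommGroup V] [Module k V]

theorem mem_Gstab_iff (ψ : Δ →* kˣ) (x : Δ ⋊[φ] L) :
    x ∈ Gstab φ ψ ↔ x.right ∈ Lstab φ ψ := Iff.rfl

theorem inl_mem_Gstab (ψ : Δ →* kˣ) (a : Δ) : inl a ∈ Gstab φ ψ := by
  rw [mem_Gstab_iff, right_inl]
  exact one_mem _

theorem aux_mul_inl (x : Δ ⋊[φ] L) (a : Δ) :
    x * inl a = inl (φ x.right a) * x := by
  ext
  · simp [mul_comm]
  · simp

theorem twistRep_inl (ψ : Δ →* kˣ) (lam : Representation k (Lstab φ ψ) V)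
    (a : Δ) (h : inl a ∈ Gstab φ ψ) (v : V) :
    twistRep φ ψ lam ⟨inl (φ := φ) a, h⟩ v = (ψ a : k) • v := by
  have h1 : toLstab φ ψ ⟨inl a, h⟩ = 1 := Subtype.ext (by simp [toLstab])
  show (ψ ((inl (φ := φ) a).left) : k) • lam (toLstab φ ψ ⟨inl a, h⟩) v = _
  rw [h1, left_inl, map_one]
  rfl

theorem twistRep_inr (ψ : Δ →* kˣ) (lam : Representation k (Lstab φ ψ) V)
    (l : Lstab φ ψ) (h : inr (l : L) ∈ Gstab φ ψ) (v : V) :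
    twistRep φ ψ lam ⟨inr (φ := φ) (l : L), h⟩ v = lam l v := by
  have h1 : toLstab φ ψ ⟨inr (l : L), h⟩ = l := Subtype.ext (by simp [toLstab])
  show (ψ ((inr (φ := φ) (l : L)).left) : k) • lam (toLstab φ ψ ⟨inr (l : L), h⟩) v = _
  rw [h1, left_inr, map_one]
  simp

theorem inr_mem_Gstab (ψ : Δ →* kˣ) (l : Lstab φ ψ) : inr (l : L) ∈ Gstab φ ψ := by
  rw [mem_Gstab_iff, right_inr]
  exact l.2

end SDP

section Ind
variable {k : Type} [Field k] {Δ L : Type} [CommGroup Δ] [Group L] (φ : L →* MulAut Δ)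
variable {V : Type} [AddCommGroup V] [Module k V]

open Classical in
/-- The element of `Ind` supported on `G_ψ` with value `v` at `1`. -/
noncomputable def indElt (ψ : Δ →* kˣ) (lam : Representation k (Lstab φ ψ) V) (v : V) :
    IndSubmodule (Gstab φ ψ) (twistRep φ ψ lam) :=
  ⟨fun x => if hx : x ∈ Gstab φ ψ then twistRep φ ψ lam ⟨x, hx⟩ v else 0, by
    intro h g
    dsimp only
    by_cases hg : g ∈ Gstab φ ψ
    · rw [dif_pos (mul_mem h.2 hg), dif_pos hg]
      have he : (⟨(h : Δ ⋊[φ] L) * g, mul_mem h.2 hg⟩ : Gstab φ ψ) = h * ⟨g, hg⟩ := rfl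
      rw [he, map_mul]
      rfl
    · rw [dif_neg hg, dif_neg, map_zero]
      intro hc
      exact hg (by simpa using mul_mem (inv_mem h.2) hc)⟩

variable (ψ : Δ →* kˣ) (lam : Representation k (Lstab φ ψ) V)

theorem indElt_apply_mem (v : V) {x : Δ ⋊[φ] L} (hx : x ∈ Gstab φ ψ) :
    (indElt φ ψ lam v : (Δ ⋊[φ] L) → V) x = twistRep φ ψ lam ⟨x, hx⟩ v := dif_pos hx

theorem indElt_apply_not_mem (v : V) {x : Δ ⋊[φ] L} (hx : ¬ x ∈ Gstab φ ψ) :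
    (indElt φ ψ lam v : (Δ ⋊[φ] L) → V) x = 0 := dif_neg hx

theorem indElt_apply_one (v : V) :
    (indElt φ ψ lam v : (Δ ⋊[φ] L) → V) 1 = v := by
  rw [indElt_apply_mem φ ψ lam v (one_mem _)]
  have : (⟨(1 : Δ ⋊[φ] L), one_mem _⟩ : Gstab φ ψ) = 1 := rfl
  rw [this, map_one]
  rfl

theorem indElt_add (v w : V) :
    indElt φ ψ lam (v + w) = indElt φ ψ lam v + indElt φ ψ lam w := by
  apply Subtype.ext
  funext x
  by_cases hx : x ∈ Gstab φ ψ
  · show _ = (indElt φ ψ lam v : (Δ ⋊[φ] L) → V) x + (indElt φ ψ lam w : (Δ ⋊[φ] L) → V) x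
    rw [indElt_apply_mem φ ψ lam _ hx, indElt_apply_mem φ ψ lam _ hx,
      indElt_apply_mem φ ψ lam _ hx, map_add]
  · show _ = (indElt φ ψ lam v : (Δ ⋊[φ] L) → V) x + (indElt φ ψ lam w : (Δ ⋊[φ] L) → V) x
    rw [indElt_apply_not_mem φ ψ lam _ hx, indElt_apply_not_mem φ ψ lam _ hx,
      indElt_apply_not_mem φ ψ lam _ hx, add_zero]

theorem indElt_smul (c : k) (v : V) :
    indElt φ ψ lam (c • v) = c • indElt φ ψ lam v := by
  apply Subtype.ext
  funext x
  by_cases hx : x ∈ Gstab φ ψ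
  · show _ = c • (indElt φ ψ lam v : (Δ ⋊[φ] L) → V) x
    rw [indElt_apply_mem φ ψ lam _ hx, indElt_apply_mem φ ψ lam _ hx, map_smul]
  · show _ = c • (indElt φ ψ lam v : (Δ ⋊[φ] L) → V) x
    rw [indElt_apply_not_mem φ ψ lam _ hx, indElt_apply_not_mem φ ψ lam _ hx, smul_zero]

/-- Translating `indElt v` by an element of `G_ψ` twists `v`. -/
theorem indElt_translate (w : Δ ⋊[φ] L) (hw : w ∈ Gstab φ ψ) (v : V) :
    IndRep (Gstab φ ψ) (twistRep φ ψ lam) w (indElt φ ψ lam v)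
      = indElt φ ψ lam (twistRep φ ψ lam ⟨w, hw⟩ v) := by
  apply Subtype.ext
  funext x
  show (indElt φ ψ lam v : (Δ ⋊[φ] L) → V) (x * w) = _
  by_cases hx : x ∈ Gstab φ ψ
  · rw [indElt_apply_mem φ ψ lam _ (mul_mem hx hw), indElt_apply_mem φ ψ lam _ hx]
    have he : (⟨x * w, mul_mem hx hw⟩ : Gstab φ ψ) = ⟨x, hx⟩ * ⟨w, hw⟩ := rfl
    rw [he, map_mul]
    rfl
  · rw [indElt_apply_not_mem φ ψ lam _ hx, indElt_apply_not_mem φ ψ lam _ ?_]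
    intro hc
    exact hx (by simpa using mul_mem hc (inv_mem hw))

end Ind

section Sums
variable {k : Type} [Field k] {Δ L : Type} [CommGroup Δ] [Group L] (φ : L →* MulAut Δ)
variable {V : Type} [AddCommGroup V] [Module k V]
variable (ψ : Δ →* kˣ) (lam : Representation k (Lstab φ ψ) V)

/-- Averaging against `ψ` projects onto the functions supported on `G_ψ`. -/
theorem avg_eq [Fintype Δ] (f : IndSubmodule (Gstab φ ψ) (twistRep φ ψ lam)) :
    ∑ a : Δ, (ψ a⁻¹ : k) • (IndRep (Gstab φ ψ) (twistRep φ ψ lam)) (inl a) f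
      = (Fintype.card Δ : k) • indElt φ ψ lam ((f : (Δ ⋊[φ] L) → V) 1) := by
  apply Subtype.ext
  rw [Submodule.coe_smul, AddSubmonoidClass.coe_finset_sum]
  funext x
  rw [Finset.sum_apply]
  have hterm : ∀ a : Δ,
      ((((ψ a⁻¹ : kˣ) : k) • (IndRep (Gstab φ ψ) (twistRep φ ψ lam)) (inl a) f :
        IndSubmodule (Gstab φ ψ) (twistRep φ ψ lam)) : (Δ ⋊[φ] L) → V) x
      = (((ψ a⁻¹ : kˣ) : k) * ((ψ (φ x.right a) : kˣ) : k)) •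
          (f : (Δ ⋊[φ] L) → V) x := by
    intro a
    have h1 : (((IndRep (Gstab φ ψ) (twistRep φ ψ lam)) (inl a) f :
        IndSubmodule (Gstab φ ψ) (twistRep φ ψ lam)) : (Δ ⋊[φ] L) → V) x
        = (f : (Δ ⋊[φ] L) → V) (x * inl a) := rfl
    have h2 : (f : (Δ ⋊[φ] L) → V) (x * inl a)
        = ((ψ (φ x.right a) : kˣ) : k) • (f : (Δ ⋊[φ] L) → V) x := by
      rw [aux_mul_inl]
      rw [show ((inl (φ := φ) (φ x.right a)) : Δ ⋊[φ] L)
        = ((⟨inl (φ x.right a), inl_mem_Gstab φ ψ _⟩ : Gstab φ ψ) : Δ ⋊[φ] L) from rfl]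
      rw [f.2 ⟨inl (φ x.right a), inl_mem_Gstab φ ψ _⟩ x]
      rw [twistRep_inl]
    show (((ψ a⁻¹ : kˣ) : k) • ((IndRep (Gstab φ ψ) (twistRep φ ψ lam)) (inl a) f :
        IndSubmodule (Gstab φ ψ) (twistRep φ ψ lam)) : (Δ ⋊[φ] L) → V) x = _
    rw [Pi.smul_apply, h1, h2, smul_smul]
  rw [Finset.sum_congr rfl (fun a _ => hterm a), ← Finset.sum_smul]
  by_cases hx : x ∈ Gstab φ ψ
  · have hx' : ∀ a : Δ, ψ (φ x.right a) = ψ a := hx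
    have hc : ∀ a : Δ, ((ψ a⁻¹ : kˣ) : k) * ((ψ (φ x.right a) : kˣ) : k) = 1 := by
      intro a
      rw [hx' a, ← Units.val_mul, ← map_mul, inv_mul_cancel, map_one, Units.val_one]
    have h3 : (f : (Δ ⋊[φ] L) → V) x
        = twistRep φ ψ lam ⟨x, hx⟩ ((f : (Δ ⋊[φ] L) → V) 1) := by
      have := f.2 ⟨x, hx⟩ 1
      rwa [mul_one] at this
    rw [Finset.sum_congr rfl (fun a _ => hc a), Finset.sum_const, Finset.card_univ,
      nsmul_eq_mul, mul_one, Pi.smul_apply, indElt_apply_mem φ ψ lam _ hx, ← h3]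
  · have hne : ∃ b : Δ, ψ (φ x.right b) ≠ ψ b := by
      by_contra hcon
      push_neg at hcon
      exact hx hcon
    obtain ⟨b, hb⟩ := hne
    let χ : Δ →* kˣ := (ψ.comp (φ x.right).toMonoidHom) * ψ⁻¹
    have hχ : ∀ a : Δ, ((χ a : kˣ) : k) = ((ψ a⁻¹ : kˣ) : k) * ((ψ (φ x.right a) : kˣ) : k) := by
      intro a
      show ((ψ (φ x.right a) * (ψ a)⁻¹ : kˣ) : k) = _
      rw [map_inv, Units.val_mul, mul_comm]
    have hχb : χ b ≠ 1 := by
      intro hc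
      apply hb
      have h4 : ψ (φ x.right b) * (ψ b)⁻¹ = 1 := hc
      rwa [mul_inv_eq_one] at h4
    have hsum : ∑ a : Δ, ((ψ a⁻¹ : kˣ) : k) * ((ψ (φ x.right a) : kˣ) : k) = 0 := by
      rw [← Finset.sum_congr rfl (fun a _ => hχ a)]
      exact aux_sum_char χ b hχb
    rw [hsum, zero_smul, Pi.smul_apply, indElt_apply_not_mem φ ψ lam _ hx, smul_zero]

/-- Every element of `Ind` is recovered from translates of `indElt`s. -/
theorem sum_translates [Fintype (Δ ⋊[φ] L)] [Fintype (Gstab φ ψ)]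
    (f : IndSubmodule (Gstab φ ψ) (twistRep φ ψ lam)) :
    ∑ g : Δ ⋊[φ] L, (IndRep (Gstab φ ψ) (twistRep φ ψ lam)) g⁻¹
        (indElt φ ψ lam ((f : (Δ ⋊[φ] L) → V) g))
      = (Fintype.card (Gstab φ ψ) : k) • f := by
  classical
  apply Subtype.ext
  rw [Submodule.coe_smul, AddSubmonoidClass.coe_finset_sum]
  funext x
  rw [Finset.sum_apply]
  have hterm : ∀ g : Δ ⋊[φ] L,
      (((IndRep (Gstab φ ψ) (twistRep φ ψ lam)) g⁻¹
          (indElt φ ψ lam ((f : (Δ ⋊[φ] L) → V) g)) :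
        IndSubmodule (Gstab φ ψ) (twistRep φ ψ lam)) : (Δ ⋊[φ] L) → V) x
      = (indElt φ ψ lam ((f : (Δ ⋊[φ] L) → V) g) : (Δ ⋊[φ] L) → V) (x * g⁻¹) := fun g => rfl
  rw [Finset.sum_congr rfl (fun g _ => hterm g)]
  have hre : ∑ g : Δ ⋊[φ] L,
        (indElt φ ψ lam ((f : (Δ ⋊[φ] L) → V) g) : (Δ ⋊[φ] L) → V) (x * g⁻¹)
      = ∑ u : Δ ⋊[φ] L,
        (indElt φ ψ lam ((f : (Δ ⋊[φ] L) → V) (u⁻¹ * x)) : (Δ ⋊[φ] L) → V) u := by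
    apply Fintype.sum_equiv ((Equiv.inv (Δ ⋊[φ] L)).trans (Equiv.mulLeft x))
    intro g
    have he : ((Equiv.inv (Δ ⋊[φ] L)).trans (Equiv.mulLeft x)) g = x * g⁻¹ := rfl
    rw [he, show (x * g⁻¹)⁻¹ * x = g by group]
  rw [hre]
  have hterm2 : ∀ u : Δ ⋊[φ] L,
      (indElt φ ψ lam ((f : (Δ ⋊[φ] L) → V) (u⁻¹ * x)) : (Δ ⋊[φ] L) → V) u
      = if u ∈ Gstab φ ψ then (f : (Δ ⋊[φ] L) → V) x else 0 := by
    intro u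
    by_cases hu : u ∈ Gstab φ ψ
    · rw [if_pos hu, indElt_apply_mem φ ψ lam _ hu]
      have h5 := f.2 ⟨u, hu⟩ (u⁻¹ * x)
      rw [show (↑(⟨u, hu⟩ : Gstab φ ψ) * (u⁻¹ * x)) = x by group] at h5
      exact h5.symm
    · rw [if_neg hu, indElt_apply_not_mem φ ψ lam _ hu]
  rw [Finset.sum_congr rfl (fun u _ => hterm2 u), ← Finset.sum_filter,
    Finset.sum_const, Pi.smul_apply, ← Fintype.card_subtype, Nat.cast_smul_eq_nsmul]

end Sums
/-- Wigner–Mackey: for `G = Δ ⋊ L` with `Δ` abelian, `char k ∤ |G|`, and all irreducible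
representations of `Δ` over `k` of degree 1, the representation
`θ_{ψ,λ} = Ind_{G_ψ}^G(ψ ⊗ λ)` is irreducible, for any character `ψ` of `Δ` and any
irreducible representation `λ` of `L_ψ`. -/
theorem wigner_mackey_irreducible {k : Type} [Field k] {Δ L : Type} [CommGroup Δ] [Group L]
    [Finite Δ] [Finite L] (φ : L →* MulAut Δ)
    (hchar : ¬ ((ringChar k : ℕ) ∣ Nat.card (Δ ⋊[φ] L)))
    (hdeg : ∀ (W : Type) [AddCommGroup W] [Module k W] (τ : Representation k Δ W),
      IsSimpleModule (MonoidAlgebra k Δ) τ.asModule → Module.finrank k W = 1)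
    (ψ : Δ →* kˣ) (V : Type) [AddCommGroup V] [Module k V] [FiniteDimensional k V]
    (lam : Representation k (Lstab φ ψ) V)
    (hlam : IsSimpleModule (MonoidAlgebra k (Lstab φ ψ)) lam.asModule) :
    IsSimpleModule (MonoidAlgebra k (Δ ⋊[φ] L))
      (IndRep (Gstab φ ψ) (twistRep φ ψ lam)).asModule := by
  classical
  haveI : Finite (Δ ⋊[φ] L) := Finite.of_equiv (Δ × L)
    ⟨fun p => ⟨p.1, p.2⟩, fun g => (g.left, g.right), fun p => rfl, fun g => rfl⟩
  haveI := Fintype.ofFinite Δ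
  haveI := Fintype.ofFinite (Δ ⋊[φ] L)
  haveI := Fintype.ofFinite (Gstab φ ψ)
  haveI := hlam
  haveI : Nontrivial lam.asModule :=
    IsSimpleModule.nontrivial (MonoidAlgebra k (Lstab φ ψ)) lam.asModule
  haveI : Nontrivial V := ‹Nontrivial lam.asModule›
  set ρ := IndRep (Gstab φ ψ) (twistRep φ ψ lam) with hρ
  -- cards are invertible in k
  have hΔ : ((Fintype.card Δ : ℕ) : k) ≠ 0 := by
    apply aux_cast_ne_zero hchar
    rw [← Nat.card_eq_fintype_card, aux_card_sdp φ]
    exact Dvd.intro _ rfl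
  have hHdvd : Nat.card (Gstab φ ψ) ∣ Nat.card (Δ ⋊[φ] L) :=
    Subgroup.card_subgroup_dvd_card _
  have hH : ((Fintype.card (Gstab φ ψ) : ℕ) : k) ≠ 0 := by
    apply aux_cast_ne_zero hchar
    rw [← Nat.card_eq_fintype_card]
    exact hHdvd
  -- the module is nontrivial
  obtain ⟨v, hv⟩ := exists_ne (0 : V)
  haveI hnt : Nontrivial ρ.asModule := by
    refine ⟨indElt φ ψ lam v, 0, fun hc => hv ?_⟩
    have := congrArg (fun (f : IndSubmodule (Gstab φ ψ) (twistRep φ ψ lam)) =>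
      (f : (Δ ⋊[φ] L) → V) 1) hc
    exact (indElt_apply_one φ ψ lam v).symm.trans this
  rw [isSimpleModule_iff]
  constructor
  intro p
  by_cases hp : p = ⊥
  · exact Or.inl hp
  refine Or.inr ?_
  -- extract a nonzero element of p
  obtain ⟨f, hfp, hf0⟩ := (Submodule.ne_bot_iff p).mp hp
  let fI : IndSubmodule (Gstab φ ψ) (twistRep φ ψ lam) := f
  have hfI0 : fI ≠ 0 := hf0
  have hgex : ∃ g₀ : Δ ⋊[φ] L, (fI : (Δ ⋊[φ] L) → V) g₀ ≠ 0 := by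
    by_contra hcon
    push_neg at hcon
    exact hfI0 (Subtype.ext (funext hcon))
  obtain ⟨g₀, hg₀⟩ := hgex
  set f' : IndSubmodule (Gstab φ ψ) (twistRep φ ψ lam) := ρ g₀ fI with hf'
  have hf'p : f' ∈ p := rho_mem_ma ρ p g₀ hfp
  set v₀ : V := (f' : (Δ ⋊[φ] L) → V) 1 with hv₀
  have hv₀ne : v₀ ≠ 0 := by
    show (f' : (Δ ⋊[φ] L) → V) 1 ≠ 0
    have h1 : (f' : (Δ ⋊[φ] L) → V) 1 = (fI : (Δ ⋊[φ] L) → V) (1 * g₀) := rfl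
    rw [h1, one_mul]
    exact hg₀
  -- the averaged element lies in p
  have h_ind0 : indElt φ ψ lam v₀ ∈ p := by
    have hsum : ∑ a : Δ, (ψ a⁻¹ : k) • ρ (inl a) f' ∈ p :=
      Submodule.sum_mem p (fun a _ => smul_mem_ma ρ p _ (rho_mem_ma ρ p _ hf'p))
    rw [avg_eq φ ψ lam f'] at hsum
    have := smul_mem_ma ρ p ((Fintype.card Δ : k)⁻¹) hsum
    change ((Fintype.card Δ : k)⁻¹ • (Fintype.card Δ : k) • indElt φ ψ lam v₀ :
      IndSubmodule (Gstab φ ψ) (twistRep φ ψ lam)) ∈ p at this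
    rwa [smul_smul, inv_mul_cancel₀ hΔ, one_smul] at this
  -- the set of v with indElt v ∈ p is an invariant submodule of V
  have hzero : indElt φ ψ lam (0 : V) ∈ p := by
    have h0 : indElt φ ψ lam (0 : V) = 0 := by
      rw [show (0 : V) = (0 : k) • (0 : V) by rw [zero_smul],
        indElt_smul, zero_smul]
    rw [h0]
    exact p.zero_mem
  set S : Submodule k V :=
    { carrier := {w | indElt φ ψ lam w ∈ p}
      zero_mem' := hzero
      add_mem' := by
        intro w w' hw hw'
        show indElt φ ψ lam (w + w') ∈ p
        rw [indElt_add]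
        exact p.add_mem hw hw'
      smul_mem' := by
        intro c w hw
        show indElt φ ψ lam (c • w) ∈ p
        rw [indElt_smul]
        exact smul_mem_ma ρ p c hw } with hS
  have hSinv : ∀ (l : Lstab φ ψ), ∀ w ∈ S, lam l w ∈ S := by
    intro l w hw
    show indElt φ ψ lam (lam l w) ∈ p
    rw [← twistRep_inr φ ψ lam l (inr_mem_Gstab φ ψ l),
      ← indElt_translate φ ψ lam _ (inr_mem_Gstab φ ψ l)]
    exact rho_mem_ma ρ p _ hw
  -- by simplicity of lam, S = ⊤
  have hS_all : ∀ w : V, indElt φ ψ lam w ∈ p := by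
    have hps := IsSimpleOrder.eq_bot_or_eq_top (invtSubmodule lam S hSinv)
    rcases hps with hbot | htop
    · exfalso
      have : v₀ ∈ invtSubmodule lam S hSinv := h_ind0
      rw [hbot] at this
      exact hv₀ne this
    · intro w
      have h6 : lam.asModuleEquiv.symm w ∈ invtSubmodule lam S hSinv := by
        rw [htop]; exact Submodule.mem_top
      exact h6
  -- conclude p = ⊤
  rw [Submodule.eq_top_iff']
  intro h
  have hsum2 : (Fintype.card (Gstab φ ψ) : k) • h ∈ p := by
    change @HSMul.hSMul k (IndSubmodule (Gstab φ ψ) (twistRep φ ψ lam)) _ _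
      (Fintype.card (Gstab φ ψ) : k) h ∈ p
    rw [← sum_translates φ ψ lam h]
    exact Submodule.sum_mem p (fun g _ => rho_mem_ma ρ p _ (hS_all _))
  have := smul_mem_ma ρ p ((Fintype.card (Gstab φ ψ) : k)⁻¹) hsum2
  rwa [smul_smul, inv_mul_cancel₀ hH, one_smul] at this
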